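/- Let Θ be a measurable space, K ≥ 1, let μ_pr be a probability measure on Θ and μ_pr^K its K-fold product on Θ^K. Let π_1,…,π_K : Θ → [0,∞) be measurable with ∫ π_k dμ_pr = 1, let μ_k be the probability measure with density π_k with respect to μ_pr, and let μ := μ_1 × ⋯ × μ_K, which has density π(θ) := ∏_{k=1}^K π_k(θ_k) with respect to μ_pr^K. Let S_K be a subgroup of the symmetric group on {1,…,K}, let q^{UW} be the unweighted swapping kernel q^{UW}(θ, B) := Σ_{σ∈S_K} r^{UW}(θ,σ) δ_{θ_σ}(B) with r^{UW}(θ,σ) := π(θ_σ)/Σ_{σ'∈S_K} π(θ_{σ'}) when the denominator is positive and 1/|S_K| otherwise, and for k = 1,…,K let p_k be a Markov kernel on Θ reversible with respect to μ_k, with product kernel p(θ, ·) := p_1(θ_1, ·) × ⋯ × p_K(θ_K, ·). Then the Unweighted Generalized Parallel Tempering kernel p^{UW} := q^{UW} ∘ p ∘ q^{UW} (first apply q^{UW}, then p, then q^{UW}) is reversible with respect to μ. -/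

import Mathlib

open MeasureTheory ProbabilityTheory ENNReal Set

lemma aux_lintegral_pi_prod {α : Type*} [MeasurableSpace α] :
    ∀ (n : ℕ) (ν : Fin n → Measure α), (∀ i, IsProbabilityMeasure (ν i)) →
    ∀ (f : Fin n → α → ℝ≥0∞), (∀ i, Measurable (f i)) →
    ∫⁻ ω, ∏ i, f i (ω i) ∂Measure.pi ν = ∏ i, ∫⁻ x, f i x ∂ν i := by
  intro n
  induction n with
  | zero =>
      intro ν hν f hf
      haveI := hν
      simp [lintegral_const]
  | succ n ih =>
      intro ν hν f hf
      haveI := hν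
      have mp := measurePreserving_piFinSuccAbove ν 0
      set G : α × (Fin n → α) → ℝ≥0∞ :=
        fun y => f 0 y.1 * ∏ i : Fin n, f i.succ (y.2 i) with hG
      have hGm : Measurable G :=
        ((hf 0).comp measurable_fst).mul
          (Finset.measurable_prod _ fun i _ =>
            (hf i.succ).comp ((measurable_pi_apply i).comp measurable_snd))
      have h1 : ∀ ω : Fin (n + 1) → α,
          G (MeasurableEquiv.piFinSuccAbove (fun _ => α) 0 ω) = ∏ i, f i (ω i) := by
        intro ω
        rw [Fin.prod_univ_succ]
        simp [MeasurableEquiv.piFinSuccAbove, hG, Fin.zero_succAbove, Fin.tail]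
      calc ∫⁻ ω, ∏ i, f i (ω i) ∂Measure.pi ν
          = ∫⁻ ω, G (MeasurableEquiv.piFinSuccAbove (fun _ => α) 0 ω) ∂Measure.pi ν := by
            simp_rw [h1]
        _ = ∫⁻ y, G y ∂((ν 0).prod (Measure.pi fun j => ν ((0 : Fin (n+1)).succAbove j))) :=
            mp.lintegral_comp hGm
        _ = (∫⁻ x, f 0 x ∂ν 0) * ∫⁻ y, ∏ i : Fin n, f i.succ (y i)
              ∂(Measure.pi fun j => ν ((0 : Fin (n+1)).succAbove j)) :=
            lintegral_prod_mul (f := f 0)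
              (g := fun (y : Fin n → α) => ∏ i : Fin n, f i.succ (y i)) ((hf 0).aemeasurable)
              ((Finset.measurable_prod _ fun i _ =>
                (hf i.succ).comp (measurable_pi_apply i)).aemeasurable)
        _ = (∫⁻ x, f 0 x ∂ν 0) *
              ∏ i : Fin n, ∫⁻ x, f i.succ x ∂ν ((0 : Fin (n+1)).succAbove i) := by
            rw [ih _ (fun i => hν _) _ (fun i => hf i.succ)]
        _ = ∏ i, ∫⁻ x, f i x ∂ν i := by
            rw [Fin.prod_univ_succ]
            simp [Fin.zero_succAbove]

lemma aux_pi_map_coord {ι : Type*} [Fintype ι] {α β : Type*} [MeasurableSpace α]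
    [MeasurableSpace β] (ν : ι → Measure α) [∀ i, IsProbabilityMeasure (ν i)]
    (f : α → β) (hfm : Measurable f) :
    (Measure.pi ν).map (fun ω i => f (ω i)) = Measure.pi (fun i => (ν i).map f) := by
  haveI : ∀ i, IsProbabilityMeasure ((ν i).map f) :=
    fun i => Measure.isProbabilityMeasure_map hfm.aemeasurable
  have hm : Measurable (fun (ω : ι → α) i => f (ω i)) :=
    measurable_pi_lambda _ fun i => hfm.comp (measurable_pi_apply i)
  refine (Measure.pi_eq fun s hs => ?_).symm
  rw [Measure.map_apply hm (MeasurableSet.univ_pi hs)]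
  have : (fun (ω : ι → α) i => f (ω i)) ⁻¹' Set.pi Set.univ s
      = Set.pi Set.univ (fun i => f ⁻¹' s i) := by
    ext ω; simp [Set.mem_pi]
  rw [this, Measure.pi_pi]
  exact Finset.prod_congr rfl fun i _ => (Measure.map_apply hfm (hs i)).symm

lemma aux_pi_map_perm {α : Type*} [MeasurableSpace α] {n : ℕ}
    (μ0 : Measure α) [IsProbabilityMeasure μ0] (σ : Equiv.Perm (Fin n)) :
    (Measure.pi fun _ : Fin n => μ0).map (fun θ i => θ (σ i))
      = Measure.pi fun _ : Fin n => μ0 := by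
  have hm : Measurable (fun (θ : Fin n → α) i => θ (σ i)) :=
    measurable_pi_lambda _ fun i => measurable_pi_apply (σ i)
  refine (Measure.pi_eq fun s hs => ?_).symm
  rw [Measure.map_apply hm (MeasurableSet.univ_pi hs)]
  have : (fun (θ : Fin n → α) i => θ (σ i)) ⁻¹' Set.pi Set.univ s
      = Set.pi Set.univ (fun j => s (σ.symm j)) := by
    ext θ
    simp only [Set.mem_preimage, Set.mem_pi, Set.mem_univ, true_implies]
    constructor
    · intro h j; have := h (σ.symm j); rwa [Equiv.apply_symm_apply] at this
    · intro h i; have := h (σ i); rwa [Equiv.symm_apply_apply] at this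
  rw [this, Measure.pi_pi]
  exact Equiv.prod_comp σ.symm (fun j => μ0 (s j))

theorem ugpt_kernel_reversible
    {Θ : Type*} [MeasurableSpace Θ] (K : ℕ) (hK : 1 ≤ K)
    (μpr : Measure Θ) [IsProbabilityMeasure μpr]
    (μprK : Measure (Fin K → Θ)) (hμprK : μprK = Measure.pi fun _ => μpr)
    (πk : Fin K → Θ → ℝ≥0∞) (hπkm : ∀ k, Measurable (πk k))
    (hπkfin : ∀ k x, πk k x ≠ ∞) (hπkint : ∀ k, ∫⁻ x, πk k x ∂μpr = 1)
    (μk : Fin K → Measure Θ) [∀ k, IsProbabilityMeasure (μk k)]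
    (hμk : ∀ k, μk k = μpr.withDensity (πk k))
    (μ : Measure (Fin K → Θ)) (hμ : μ = Measure.pi μk)
    (π : (Fin K → Θ) → ℝ≥0∞) (hπ : ∀ θ, π θ = ∏ k, πk k (θ k))
    (SK : Finset (Equiv.Perm (Fin K)))
    (hSKid : 1 ∈ SK)
    (hSKinv : ∀ σ ∈ SK, σ⁻¹ ∈ SK)
    (hSKmul : ∀ σ ∈ SK, ∀ ρ ∈ SK, σ * ρ ∈ SK)
    (r : (Fin K → Θ) → Equiv.Perm (Fin K) → ℝ≥0∞)
    (hr : ∀ θ σ, r θ σ =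
      if 0 < ∑ σ' ∈ SK, π (fun i => θ (σ' i)) then
        π (fun i => θ (σ i)) / ∑ σ' ∈ SK, π (fun i => θ (σ' i))
      else (SK.card : ℝ≥0∞)⁻¹)
    (q : (Fin K → Θ) → Measure (Fin K → Θ))
    (hq : ∀ θ, q θ = ∑ σ ∈ SK, r θ σ • Measure.dirac (fun i => θ (σ i)))
    (pk : Fin K → Kernel Θ Θ) [∀ k, IsMarkovKernel (pk k)]
    (hrev : ∀ k, ∀ A B : Set Θ, MeasurableSet A → MeasurableSet B →
      ∫⁻ x in A, pk k x B ∂(μk k) = ∫⁻ x in B, pk k x A ∂(μk k))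
    (p : (Fin K → Θ) → Measure (Fin K → Θ))
    (hp : ∀ θ, p θ = Measure.pi fun k => pk k (θ k))
    (pUW : (Fin K → Θ) → Set (Fin K → Θ) → ℝ≥0∞)
    (hpUW : ∀ θ A, pUW θ A = ∫⁻ z, ∫⁻ z', q z' A ∂(p z) ∂(q θ)) :
    ∀ A B : Set (Fin K → Θ), MeasurableSet A → MeasurableSet B →
      ∫⁻ θ in A, pUW θ B ∂μ = ∫⁻ θ in B, pUW θ A ∂μ := by
  classical
  intro A B hA hB
  -- basic measurability facts
  have hπm : Measurable π := by
    have : π = fun θ => ∏ k, πk k (θ k) := funext hπ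
    rw [this]
    exact Finset.measurable_prod _ fun k _ => (hπkm k).comp (measurable_pi_apply k)
  have hpermm : ∀ σ : Equiv.Perm (Fin K),
      Measurable (fun (θ : Fin K → Θ) => (fun i => θ (σ i))) :=
    fun σ => measurable_pi_lambda _ fun i => measurable_pi_apply (σ i)
  set S : (Fin K → Θ) → ℝ≥0∞ := fun θ => ∑ σ' ∈ SK, π (fun i => θ (σ' i)) with hS
  have hSm : Measurable S :=
    Finset.measurable_sum _ fun σ _ => hπm.comp (hpermm σ)
  have hπfin : ∀ θ, π θ ≠ ∞ := by
    intro θ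
    rw [hπ]
    exact (ENNReal.prod_lt_top fun k _ => lt_top_iff_ne_top.mpr (hπkfin k (θ k))).ne
  have hπ_le_S : ∀ θ, π θ ≤ S θ := by
    intro θ
    have := Finset.single_le_sum
      (f := fun σ' : Equiv.Perm (Fin K) => π (fun i => θ (σ' i)))
      (fun _ _ => zero_le) hSKid
    simpa using this
  -- key rewriting of π θ * r θ σ
  have hkey : ∀ θ σ, π θ * r θ σ = π θ * π (fun i => θ (σ i)) / S θ := by
    intro θ σ
    rw [hr]
    split_ifs with h
    · rw [mul_div_assoc]
    · have hS0 : S θ = 0 := by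
        rw [hS]
        simpa [pos_iff_ne_zero] using h
      have hπ0 : π θ = 0 := le_antisymm (hS0 ▸ hπ_le_S θ) zero_le
      simp [hπ0]
  -- invariance of S under SK
  have hSinv : ∀ (θ : Fin K → Θ) (τ : Equiv.Perm (Fin K)), τ ∈ SK →
      S (fun i => θ (τ i)) = S θ := by
    intro θ τ hτ
    rw [hS]
    refine Finset.sum_nbij' (i := fun σ' => τ * σ') (j := fun ρ => τ⁻¹ * ρ)
      (fun σ' hσ' => hSKmul τ hτ σ' hσ') (fun ρ hρ => hSKmul τ⁻¹ (hSKinv τ hτ) ρ hρ)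
      (fun σ' _ => by group) (fun ρ _ => by group) (fun σ' _ => rfl)
  -- μ as a density w.r.t. the product prior
  have hμd : μ = μprK.withDensity π := by
    rw [hμ, hμprK]
    refine Measure.pi_eq fun s hs => ?_
    rw [withDensity_apply _ (MeasurableSet.univ_pi hs),
      ← lintegral_indicator (MeasurableSet.univ_pi hs)]
    have heq : ∀ ω : Fin K → Θ, (Set.pi Set.univ s).indicator π ω
        = ∏ k, (s k).indicator (πk k) (ω k) := by
      intro ω
      by_cases hω : ω ∈ Set.pi Set.univ s
      · rw [Set.indicator_of_mem hω, hπ]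
        exact Finset.prod_congr rfl fun k _ =>
          (Set.indicator_of_mem (hω k (Set.mem_univ k)) _).symm
      · rw [Set.indicator_of_notMem hω]
        rw [Set.mem_pi] at hω
        push_neg at hω
        obtain ⟨k, -, hk⟩ := hω
        exact (Finset.prod_eq_zero (Finset.mem_univ k)
          (Set.indicator_of_notMem hk _)).symm
    simp_rw [heq]
    rw [aux_lintegral_pi_prod K (fun _ => μpr) (fun _ => inferInstance)
      (fun k => (s k).indicator (πk k)) (fun k => (hπkm k).indicator (hs k))]
    refine Finset.prod_congr rfl fun k _ => ?_
    rw [hμk k, withDensity_apply _ (hs k), ← lintegral_indicator (hs k)]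
  have hμint : ∀ f : (Fin K → Θ) → ℝ≥0∞, Measurable f →
      ∫⁻ θ, f θ ∂μ = ∫⁻ θ, π θ * f θ ∂μprK := by
    intro f hf
    rw [hμd, lintegral_withDensity_eq_lintegral_mul _ hπm hf]
    rfl
  -- q applied to a function
  have hQapp : ∀ (f : (Fin K → Θ) → ℝ≥0∞), Measurable f → ∀ θ,
      ∫⁻ y, f y ∂q θ = ∑ σ ∈ SK, r θ σ * f (fun i => θ (σ i)) := by
    intro f hf θ
    rw [hq, lintegral_finset_sum_measure]
    exact Finset.sum_congr rfl fun σ _ => by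
      rw [lintegral_smul_measure, lintegral_dirac' _ hf, smul_eq_mul]
  have hrm : ∀ σ, Measurable fun θ => r θ σ := by
    intro σ
    have : (fun θ => r θ σ) = fun θ =>
        if 0 < S θ then π (fun i => θ (σ i)) / S θ else (SK.card : ℝ≥0∞)⁻¹ :=
      funext fun θ => hr θ σ
    rw [this]
    exact Measurable.ite (measurableSet_lt measurable_const hSm)
      ((hπm.comp (hpermm σ)).div hSm) measurable_const
  have hQm : ∀ (f : (Fin K → Θ) → ℝ≥0∞), Measurable f →
      Measurable fun θ => ∫⁻ y, f y ∂q θ := by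
    intro f hf
    have : (fun θ => ∫⁻ y, f y ∂q θ)
        = fun θ => ∑ σ ∈ SK, r θ σ * f (fun i => θ (σ i)) :=
      funext fun θ => hQapp f hf θ
    rw [this]
    exact Finset.measurable_sum _ fun σ _ => (hrm σ).mul (hf.comp (hpermm σ))
  -- change of variables over the prior
  have hperm_int : ∀ (h : (Fin K → Θ) → ℝ≥0∞), Measurable h →
      ∀ σ : Equiv.Perm (Fin K),
      ∫⁻ θ, h θ ∂μprK = ∫⁻ θ, h (fun i => θ (σ i)) ∂μprK := by
    intro h hh σ
    rw [hμprK]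
    conv_lhs => rw [← aux_pi_map_perm μpr σ]
    rw [lintegral_map hh (hpermm σ)]
  -- functional reversibility of q
  have hQrev : ∀ f g : (Fin K → Θ) → ℝ≥0∞, Measurable f → Measurable g →
      ∫⁻ θ, f θ * ∫⁻ y, g y ∂q θ ∂μ = ∫⁻ θ, g θ * ∫⁻ y, f y ∂q θ ∂μ := by
    intro f g hf hg
    have main : ∀ f g : (Fin K → Θ) → ℝ≥0∞, Measurable f → Measurable g →
        ∫⁻ θ, f θ * ∫⁻ y, g y ∂q θ ∂μ
        = ∑ σ ∈ SK, ∫⁻ θ, f θ * g (fun i => θ (σ i)) *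
            (π θ * π (fun i => θ (σ i)) / S θ) ∂μprK := by
      intro f g hf hg
      rw [hμint (fun θ => f θ * ∫⁻ y, g y ∂q θ) (hf.mul (hQm g hg))]
      have heq : ∀ θ, π θ * (f θ * ∫⁻ y, g y ∂q θ)
          = ∑ σ ∈ SK, f θ * g (fun i => θ (σ i)) *
              (π θ * π (fun i => θ (σ i)) / S θ) := by
        intro θ
        rw [hQapp g hg θ, Finset.mul_sum, Finset.mul_sum]
        refine Finset.sum_congr rfl fun σ _ => ?_
        rw [← hkey θ σ]
        ring
      simp_rw [heq]
      exact lintegral_finset_sum _ fun σ _ =>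
        ((hf.mul (hg.comp (hpermm σ))).mul
          ((hπm.mul (hπm.comp (hpermm σ))).div hSm))
    rw [main f g hf hg, main g f hg hf]
    have hterm : ∀ σ ∈ SK,
        ∫⁻ θ, f θ * g (fun i => θ (σ i)) * (π θ * π (fun i => θ (σ i)) / S θ) ∂μprK
        = ∫⁻ θ, g θ * f (fun i => θ (σ⁻¹ i)) *
            (π θ * π (fun i => θ (σ⁻¹ i)) / S θ) ∂μprK := by
      intro σ hσ
      rw [hperm_int (fun θ => (f θ * g fun i => θ (σ i)) *
          ((π θ * π fun i => θ (σ i)) / S θ))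
        ((hf.mul (hg.comp (hpermm σ))).mul
          ((hπm.mul (hπm.comp (hpermm σ))).div hSm)) σ⁻¹]
      refine lintegral_congr fun θ => ?_
      have h1 : (fun i => (fun i => θ (σ⁻¹ i)) (σ i)) = θ := by
        funext i; simp
      have h2 : S (fun i => θ (σ⁻¹ i)) = S θ := hSinv θ σ⁻¹ (hSKinv σ hσ)
      rw [h1, h2]
      ring
    rw [Finset.sum_congr rfl hterm]
    refine Finset.sum_nbij' (i := fun σ => σ⁻¹) (j := fun σ => σ⁻¹)
      (fun σ hσ => hSKinv σ hσ) (fun σ hσ => hSKinv σ hσ)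
      (fun σ _ => by simp) (fun σ _ => by simp) (fun σ _ => by simp)
  -- measurability of the product kernel
  have hpiMeas : ∀ s : Set (Fin K → Θ), MeasurableSet s →
      Measurable (fun θ : Fin K → Θ => Measure.pi (fun k => pk k (θ k)) s) := by
    intro s hs
    refine MeasurableSpace.induction_on_inter
      (C := fun s _ => Measurable (fun θ : Fin K → Θ => Measure.pi (fun k => pk k (θ k)) s))
      (s := Set.pi Set.univ '' Set.pi Set.univ fun _ : Fin K =>
        { t : Set Θ | MeasurableSet t })
      generateFrom_pi.symm isPiSystem_pi ?_ ?_ ?_ ?_ s hs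
    · simp
    · rintro t ⟨t', ht', rfl⟩
      simp only [Set.mem_pi, Set.mem_univ, true_implies, Set.mem_setOf_eq] at ht'
      simp_rw [Measure.pi_pi]
      exact Finset.measurable_prod _ fun k _ =>
        (Kernel.measurable_coe (pk k) (ht' k)).comp (measurable_pi_apply k)
    · intro t htm ih
      have : ∀ θ : Fin K → Θ, Measure.pi (fun k => pk k (θ k)) tᶜ
          = 1 - Measure.pi (fun k => pk k (θ k)) t := by
        intro θ
        rw [measure_compl htm (measure_ne_top _ _), measure_univ]
      simp_rw [this]
      exact measurable_const.sub ih
    · intro t hdisj htm ih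
      have : ∀ θ : Fin K → Θ, Measure.pi (fun k => pk k (θ k)) (⋃ i, t i)
          = ∑' i, Measure.pi (fun k => pk k (θ k)) (t i) := by
        intro θ
        exact measure_iUnion hdisj htm
      simp_rw [this]
      exact Measurable.ennreal_tsum ih
  set κ : Kernel (Fin K → Θ) (Fin K → Θ) :=
    { toFun := fun θ => Measure.pi (fun k => pk k (θ k)),
      measurable' := Measure.measurable_of_measurable_coe _ hpiMeas } with hκdef
  have hκ : ∀ θ, κ θ = Measure.pi (fun k => pk k (θ k)) := fun θ => rfl
  haveI : IsMarkovKernel κ :=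
    ⟨fun θ => by rw [hκ]; infer_instance⟩
  have hpκ : ∀ θ, p θ = κ θ := fun θ => by rw [hp, hκ]
  -- measurability of P
  have hPm : ∀ f : (Fin K → Θ) → ℝ≥0∞, Measurable f →
      Measurable fun θ => ∫⁻ y, f y ∂p θ := by
    intro f hf
    have : (fun θ => ∫⁻ y, f y ∂p θ) = fun θ => ∫⁻ y, f y ∂κ θ :=
      funext fun θ => by rw [hpκ]
    rw [this]
    exact Measurable.lintegral_kernel hf
  -- the component joint measures and their symmetry
  set ν : Fin K → Measure (Θ × Θ) := fun k => (μk k) ⊗ₘ (pk k) with hν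
  haveI : ∀ k, IsProbabilityMeasure (ν k) := fun k => by rw [hν]; infer_instance
  have hνsymm : ∀ k, (ν k).map Prod.swap = ν k := by
    intro k
    haveI : IsProbabilityMeasure ((ν k).map Prod.swap) :=
      Measure.isProbabilityMeasure_map measurable_swap.aemeasurable
    refine ext_of_generate_finite _ generateFrom_prod.symm isPiSystem_prod ?_ ?_
    · rintro _ ⟨s, hs, t, ht, rfl⟩
      simp only [Set.mem_setOf_eq] at hs ht
      rw [Measure.map_apply measurable_swap (hs.prod ht), Set.preimage_swap_prod,
        hν]
      rw [Measure.compProd_apply_prod ht hs, Measure.compProd_apply_prod hs ht]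
      exact (hrev k s t hs ht).symm
    · simp
  -- joint measure of μ and κ as image of a product measure
  set e : (Fin K → Θ × Θ) → (Fin K → Θ) × (Fin K → Θ) :=
    fun ω => (fun k => (ω k).1, fun k => (ω k).2) with he
  have hem : Measurable e :=
    Measurable.prod
      (measurable_pi_lambda _ fun k => measurable_fst.comp (measurable_pi_apply k))
      (measurable_pi_lambda _ fun k => measurable_snd.comp (measurable_pi_apply k))
  have hM : μ ⊗ₘ κ = (Measure.pi ν).map e := by
    haveI : IsProbabilityMeasure μ := by rw [hμ]; infer_instance
    haveI : IsProbabilityMeasure ((Measure.pi ν).map e) :=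
      Measure.isProbabilityMeasure_map hem.aemeasurable
    have hspan : IsCountablySpanning
        (Set.pi Set.univ '' Set.pi Set.univ fun _ : Fin K =>
          { t : Set Θ | MeasurableSet t }) :=
      IsCountablySpanning.pi fun _ => isCountablySpanning_measurableSet
    refine ext_of_generate_finite _
      (generateFrom_eq_prod generateFrom_pi generateFrom_pi hspan hspan).symm
      (isPiSystem_pi.prod isPiSystem_pi) ?_ ?_
    · rintro _ ⟨_, ⟨s, hs, rfl⟩, _, ⟨t, ht, rfl⟩, rfl⟩
      simp only [Set.mem_pi, Set.mem_univ, true_implies, Set.mem_setOf_eq] at hs ht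
      have hsm : MeasurableSet (Set.pi Set.univ s) := MeasurableSet.univ_pi hs
      have htm : MeasurableSet (Set.pi Set.univ t) := MeasurableSet.univ_pi ht
      rw [Measure.compProd_apply_prod hsm htm]
      rw [Measure.map_apply hem (hsm.prod htm)]
      have hpre : e ⁻¹' (Set.pi Set.univ s ×ˢ Set.pi Set.univ t)
          = Set.pi Set.univ fun k => s k ×ˢ t k := by
        ext ω
        simp only [he, Set.mem_preimage, Set.mem_prod, Set.mem_pi, Set.mem_univ,
          true_implies]
        exact (forall_and ..).symm
      rw [hpre, Measure.pi_pi]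
      calc ∫⁻ θ in Set.pi Set.univ s, κ θ (Set.pi Set.univ t) ∂μ
          = ∫⁻ θ, (Set.pi Set.univ s).indicator
              (fun θ => Measure.pi (fun k => pk k (θ k)) (Set.pi Set.univ t)) θ ∂μ := by
            rw [lintegral_indicator hsm]
            rfl
        _ = ∫⁻ θ, ∏ k, (s k).indicator (fun x => pk k x (t k)) (θ k) ∂μ := by
            refine lintegral_congr fun θ => ?_
            by_cases hθ : θ ∈ Set.pi Set.univ s
            · rw [Set.indicator_of_mem hθ, Measure.pi_pi]
              exact Finset.prod_congr rfl fun k _ =>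
                (Set.indicator_of_mem (hθ k (Set.mem_univ k))
                  (fun x => pk k x (t k))).symm
            · rw [Set.indicator_of_notMem hθ]
              rw [Set.mem_pi] at hθ
              push_neg at hθ
              obtain ⟨k, -, hk⟩ := hθ
              exact (Finset.prod_eq_zero (Finset.mem_univ k)
                (Set.indicator_of_notMem hk _)).symm
        _ = ∏ k, ∫⁻ x, (s k).indicator (fun x => pk k x (t k)) x ∂μk k := by
            rw [hμ]
            exact aux_lintegral_pi_prod K μk (fun _ => inferInstance) _
              (fun k => (Kernel.measurable_coe (pk k) (ht k)).indicator (hs k))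
        _ = ∏ k, (ν k) (s k ×ˢ t k) := by
            refine Finset.prod_congr rfl fun k _ => ?_
            rw [hν, Measure.compProd_apply_prod (hs k) (ht k),
              ← lintegral_indicator (hs k)]
    · simp
  -- functional reversibility of p
  have hPrev : ∀ f g : (Fin K → Θ) → ℝ≥0∞, Measurable f → Measurable g →
      ∫⁻ θ, f θ * ∫⁻ y, g y ∂p θ ∂μ = ∫⁻ θ, g θ * ∫⁻ y, f y ∂p θ ∂μ := by
    haveI : IsProbabilityMeasure μ := by rw [hμ]; infer_instance
    have key : ∀ f g : (Fin K → Θ) → ℝ≥0∞, Measurable f → Measurable g →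
        ∫⁻ θ, f θ * ∫⁻ y, g y ∂p θ ∂μ
        = ∫⁻ ω, f (fun k => (ω k).1) * g (fun k => (ω k).2) ∂Measure.pi ν := by
      intro f g hf hg
      have h1 : ∫⁻ θ, f θ * ∫⁻ y, g y ∂p θ ∂μ
          = ∫⁻ x : (Fin K → Θ) × (Fin K → Θ), f x.1 * g x.2 ∂(μ ⊗ₘ κ) := by
        have hfg : Measurable (fun x : (Fin K → Θ) × (Fin K → Θ) => f x.1 * g x.2) := by
          exact (hf.comp measurable_fst).mul (hg.comp measurable_snd)
        rw [Measure.lintegral_compProd hfg]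
        refine lintegral_congr fun θ => ?_
        rw [hpκ θ]
        exact (lintegral_const_mul _ hg).symm
      have hfg : Measurable (fun x : (Fin K → Θ) × (Fin K → Θ) => f x.1 * g x.2) := by
        exact (hf.comp measurable_fst).mul (hg.comp measurable_snd)
      rw [h1, hM, lintegral_map hfg hem]
    intro f g hf hg
    rw [key f g hf hg, key g f hg hf]
    have hswap : (Measure.pi ν).map (fun ω k => Prod.swap (ω k)) = Measure.pi ν := by
      rw [aux_pi_map_coord ν Prod.swap measurable_swap]
      exact congrArg Measure.pi (funext hνsymm)
    have hswapm : Measurable (fun (ω : Fin K → Θ × Θ) k => Prod.swap (ω k)) :=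
      measurable_pi_lambda _ fun k => measurable_swap.comp (measurable_pi_apply k)
    have hfg : Measurable (fun ω : Fin K → Θ × Θ =>
        f (fun k => (ω k).1) * g (fun k => (ω k).2)) := by
      exact (hf.comp (measurable_pi_lambda _ fun k =>
          measurable_fst.comp (measurable_pi_apply k))).mul
        (hg.comp (measurable_pi_lambda _ fun k =>
          measurable_snd.comp (measurable_pi_apply k)))
    conv_lhs => rw [← hswap]
    rw [lintegral_map hfg hswapm]
    exact lintegral_congr fun ω => mul_comm _ _
  -- assembly
  have hqsetm : ∀ C : Set (Fin K → Θ), MeasurableSet C →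
      Measurable fun θ => q θ C := by
    intro C hC
    have : (fun θ => q θ C) = fun θ => ∫⁻ y, C.indicator 1 y ∂q θ :=
      funext fun θ => (lintegral_indicator_one hC).symm
    rw [this]
    exact hQm _ (measurable_one.indicator hC)
  have hqint : ∀ (C : Set (Fin K → Θ)), MeasurableSet C → ∀ θ,
      ∫⁻ y, C.indicator 1 y ∂q θ = q θ C := fun C hC θ => lintegral_indicator_one hC
  set gA : (Fin K → Θ) → ℝ≥0∞ := fun z => q z A with hgA
  set gB : (Fin K → Θ) → ℝ≥0∞ := fun z => q z B with hgB
  have hgAm : Measurable gA := hqsetm A hA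
  have hgBm : Measurable gB := hqsetm B hB
  set PgA : (Fin K → Θ) → ℝ≥0∞ := fun θ => ∫⁻ z', gA z' ∂p θ with hPgA
  set PgB : (Fin K → Θ) → ℝ≥0∞ := fun θ => ∫⁻ z', gB z' ∂p θ with hPgB
  have hPgAm : Measurable PgA := hPm gA hgAm
  have hPgBm : Measurable PgB := hPm gB hgBm
  calc ∫⁻ θ in A, pUW θ B ∂μ
      = ∫⁻ θ, A.indicator 1 θ * ∫⁻ z, PgB z ∂q θ ∂μ := by
        rw [← lintegral_indicator hA]
        refine lintegral_congr fun θ => ?_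
        rw [Set.indicator_apply, Set.indicator_apply]
        split_ifs with hθ
        · rw [hpUW, Pi.one_apply, one_mul]
        · rw [zero_mul]
    _ = ∫⁻ θ, PgB θ * ∫⁻ y, A.indicator 1 y ∂q θ ∂μ :=
        hQrev _ _ (measurable_one.indicator hA) hPgBm
    _ = ∫⁻ θ, gA θ * ∫⁻ y, gB y ∂p θ ∂μ := by
        refine lintegral_congr fun θ => ?_
        rw [hqint A hA θ, mul_comm]
    _ = ∫⁻ θ, gB θ * ∫⁻ y, gA y ∂p θ ∂μ := hPrev _ _ hgAm hgBm
    _ = ∫⁻ θ, PgA θ * ∫⁻ y, B.indicator 1 y ∂q θ ∂μ := by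
        refine lintegral_congr fun θ => ?_
        rw [hqint B hB θ, mul_comm]
    _ = ∫⁻ θ, B.indicator 1 θ * ∫⁻ z, PgA z ∂q θ ∂μ :=
        (hQrev _ _ (measurable_one.indicator hB) hPgAm).symm
    _ = ∫⁻ θ in B, pUW θ A ∂μ := by
        rw [← lintegral_indicator hB]
        refine lintegral_congr fun θ => ?_
        rw [Set.indicator_apply, Set.indicator_apply]
        split_ifs with hθ
        · rw [hpUW, Pi.one_apply, one_mul]
        · rw [zero_mul]
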